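/- Fix an integer n ≥ 2 and set ρ = (n-1)/2. Define for λ ∈ ℝ and r ≥ 0 the function φ_λ(r) = (Γ(n/2)/(√π Γ((n-1)/2))) ∫_0^π (sin θ)^{n-2} (cosh r - sinh r cos θ)^{-ρ - iλ} dθ. Then for every real λ and every r ≥ 0, |φ_λ(r)| ≤ φ_0(r), and there exists C > 0 such that φ_0(r) ≤ C (1 + r) e^{-ρ r} for all r ≥ 0. -/

import Mathlib

open Complex MeasureTheory Real

private lemma sph_exp_le_base (r θ : ℝ) (hr : 0 ≤ r) :
    Real.exp (-r) ≤ Real.cosh r - Real.sinh r * Real.cos θ := by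
  have h0 : (0:ℝ) ≤ Real.sinh r := by simpa using Real.sinh_le_sinh.2 hr
  have h1 : Real.sinh r * Real.cos θ ≤ Real.sinh r := by
    nlinarith [Real.cos_le_one θ]
  have := Real.cosh_sub_sinh r
  linarith

private lemma sph_base_pos (r θ : ℝ) (hr : 0 ≤ r) :
    0 < Real.cosh r - Real.sinh r * Real.cos θ :=
  lt_of_lt_of_le (Real.exp_pos _) (sph_exp_le_base r θ hr)

/-- the real integrand at `λ = 0` -/
private noncomputable def sphG (n : ℕ) (ρ r θ : ℝ) : ℝ :=
  Real.sin θ ^ (n - 2) * (Real.cosh r - Real.sinh r * Real.cos θ) ^ (-ρ)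

private lemma sphG_cont (n : ℕ) (ρ r : ℝ) (hr : 0 ≤ r) :
    Continuous (fun θ : ℝ => sphG n ρ r θ) := by
  apply Continuous.mul (by fun_prop)
  have hb : Continuous (fun θ : ℝ => Real.cosh r - Real.sinh r * Real.cos θ) := by fun_prop
  exact hb.rpow_const (fun θ => Or.inl (sph_base_pos r θ hr).ne')

private lemma sphG_intOn (n : ℕ) (ρ r : ℝ) (hr : 0 ≤ r) (s : Set ℝ)
    (hs : s ⊆ Set.Icc 0 π) : IntegrableOn (fun θ => sphG n ρ r θ) s := by
  exact ((sphG_cont n ρ r hr).integrableOn_Icc).mono_set hs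

private lemma sphG_nonneg (n : ℕ) (ρ r θ : ℝ) (hθ : θ ∈ Set.Icc (0:ℝ) π) (hr : 0 ≤ r) :
    0 ≤ sphG n ρ r θ := by
  have := Real.sin_nonneg_of_nonneg_of_le_pi hθ.1 hθ.2
  have := (sph_base_pos r θ hr)
  unfold sphG
  positivity

private lemma sph_norm_eq (n : ℕ) (ρ lam r θ : ℝ) (hr : 0 ≤ r)
    (hθ : θ ∈ Set.Icc (0:ℝ) π) :
    ‖((Real.sin θ ^ (n - 2) : ℝ) : ℂ) *
        (((Real.cosh r - Real.sinh r * Real.cos θ : ℝ)) : ℂ) ^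
          (-(ρ : ℂ) - Complex.I * lam)‖ = sphG n ρ r θ := by
  have hb := sph_base_pos r θ hr
  have hs := Real.sin_nonneg_of_nonneg_of_le_pi hθ.1 hθ.2
  rw [norm_mul, Complex.norm_cpow_eq_rpow_re_of_pos hb, Complex.norm_real, Real.norm_eq_abs]
  have h2 : (-(ρ : ℂ) - Complex.I * lam).re = -ρ := by simp
  rw [h2, _root_.abs_of_nonneg (pow_nonneg hs _), sphG]

private lemma sph_integrand_zero (n : ℕ) (ρ r θ : ℝ) (hr : 0 ≤ r) :
    ((Real.sin θ ^ (n - 2) : ℝ) : ℂ) *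
        (((Real.cosh r - Real.sinh r * Real.cos θ : ℝ)) : ℂ) ^
          (-(ρ : ℂ) - Complex.I * ((0:ℝ):ℂ)) = ((sphG n ρ r θ : ℝ) : ℂ) := by
  have hb := sph_base_pos r θ hr
  have : (-(ρ : ℂ) - Complex.I * ((0:ℝ):ℂ)) = (((-ρ : ℝ)) : ℂ) := by norm_num
  rw [this, ← Complex.ofReal_cpow hb.le, sphG]
  push_cast
  rfl

private lemma sphG_le_exp (n : ℕ) (ρ r θ : ℝ) (hr : 0 ≤ r) (hρ : 0 ≤ ρ)
    (hθ : θ ∈ Set.Icc (0:ℝ) π) : sphG n ρ r θ ≤ Real.exp (ρ * r) := by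
  have hs0 := Real.sin_nonneg_of_nonneg_of_le_pi hθ.1 hθ.2
  have h1 : Real.sin θ ^ (n-2) ≤ 1 := pow_le_one₀ hs0 (Real.sin_le_one θ)
  have h2 : (Real.cosh r - Real.sinh r * Real.cos θ) ^ (-ρ) ≤ Real.exp (-r) ^ (-ρ) :=
    Real.rpow_le_rpow_of_nonpos (Real.exp_pos _) (sph_exp_le_base r θ hr) (neg_nonpos.2 hρ)
  have h3 : Real.exp (-r) ^ (-ρ) = Real.exp (ρ * r) := by
    rw [← Real.exp_mul]; ring_nf
  have hb := (sph_base_pos r θ hr).le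
  calc sphG n ρ r θ ≤ 1 * (Real.exp (-r) ^ (-ρ)) := by
        exact mul_le_mul h1 h2 (Real.rpow_nonneg hb _) zero_le_one
    _ = Real.exp (ρ * r) := by rw [one_mul, h3]

private lemma sph_point2 (n : ℕ) (hn : 2 ≤ n) (ρ : ℝ) (hρ : ρ = ((n:ℝ)-1)/2) (r : ℝ)
    (hr1 : 1 ≤ r) (θ : ℝ) (hθ0 : 0 < θ) (hθπ : θ ≤ π) :
    sphG n ρ r θ ≤ (20:ℝ)^ρ * Real.exp (-ρ*r) * θ⁻¹ := by
  have hn2 : (2:ℝ) ≤ (n:ℝ) := by exact_mod_cast hn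
  have hρ0 : 0 < ρ := by rw [hρ]; linarith
  have hr : (0:ℝ) ≤ r := by linarith
  have he2 : (2:ℝ) ≤ Real.exp r := by
    have := Real.exp_one_gt_d9
    have h2 := Real.exp_le_exp.2 hr1
    linarith
  have hprod : Real.exp (-r) * Real.exp r = 1 := by
    rw [← Real.exp_add]; simp
  have hsinh : Real.exp r / 4 ≤ Real.sinh r := by
    rw [Real.sinh_eq]
    nlinarith [Real.exp_pos r, Real.exp_pos (-r)]
  have hcos : θ^2/5 ≤ 1 - Real.cos θ := by
    have h := Real.cos_le_one_sub_mul_cos_sq (x := θ)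
      (by rw [_root_.abs_of_nonneg hθ0.le]; exact hθπ)
    have key : θ^2/5 ≤ 2/π^2 * θ^2 := by
      have hpi2 : π^2 ≤ 10 := by nlinarith [Real.pi_lt_d2, Real.pi_pos]
      rw [div_mul_eq_mul_div, div_le_div_iff₀ (by norm_num) (by positivity)]
      nlinarith [sq_nonneg θ, hpi2]
    linarith
  have hbase : Real.exp r * θ^2 / 20 ≤ Real.cosh r - Real.sinh r * Real.cos θ := by
    have h1 : Real.cosh r - Real.sinh r * Real.cos θ
        = Real.exp (-r) + Real.sinh r * (1 - Real.cos θ) := by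
      have := Real.cosh_sub_sinh r; ring_nf; linarith
    have h2 : Real.exp r / 4 * (θ^2/5) ≤ Real.sinh r * (1 - Real.cos θ) :=
      mul_le_mul hsinh hcos (by positivity) (by linarith [Real.exp_pos r])
    have := Real.exp_pos (-r)
    rw [h1]; nlinarith
  have hX : (0:ℝ) < Real.exp r * θ^2/20 := by positivity
  have h2 : (Real.cosh r - Real.sinh r * Real.cos θ) ^ (-ρ)
      ≤ (Real.exp r * θ^2/20)^(-ρ) :=
    Real.rpow_le_rpow_of_nonpos hX hbase (neg_nonpos.2 hρ0.le)
  have h3 : (Real.exp r * θ^2/20)^(-ρ) = (20:ℝ)^ρ * Real.exp (-ρ*r) * (θ^2)^(-ρ) := by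
    rw [Real.div_rpow (by positivity) (by norm_num),
      Real.mul_rpow (Real.exp_pos r).le (by positivity),
      Real.rpow_neg (by norm_num : (0:ℝ) ≤ 20), ← Real.exp_mul]
    have he : Real.exp (r * -ρ) = Real.exp (-ρ*r) := by ring_nf
    rw [he, div_eq_mul_inv, inv_inv]; ring
  have h4 : θ^(n-2) * (θ^2)^(-ρ) = θ⁻¹ := by
    have hc : ((n-2 : ℕ) : ℝ) = (n:ℝ) - 2 := by
      push_cast [Nat.cast_sub hn]; ring
    rw [← Real.rpow_natCast θ (n-2), ← Real.rpow_two, ← Real.rpow_mul hθ0.le,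
      ← Real.rpow_add hθ0, hc]
    have : (n:ℝ) - 2 + 2 * (-ρ) = -1 := by rw [hρ]; ring
    rw [this, Real.rpow_neg_one]
  have hsin : Real.sin θ ^ (n-2) ≤ θ^(n-2) :=
    pow_le_pow_left₀ (Real.sin_nonneg_of_nonneg_of_le_pi hθ0.le hθπ) (Real.sin_le hθ0.le) _
  calc sphG n ρ r θ
      ≤ θ^(n-2) * ((20:ℝ)^ρ * Real.exp (-ρ*r) * (θ^2)^(-ρ)) := by
        rw [← h3]
        exact mul_le_mul hsin h2 (Real.rpow_nonneg (sph_base_pos r θ hr).le _)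
          (pow_nonneg hθ0.le _)
    _ = (20:ℝ)^ρ * Real.exp (-ρ*r) * θ⁻¹ := by rw [← h4]; ring

private lemma sph_key (n : ℕ) (hn : 2 ≤ n) (ρ : ℝ) (hρ : ρ = ((n:ℝ)-1)/2) (r : ℝ)
    (hr : 0 ≤ r) :
    ∫ θ in Set.Ioo (0:ℝ) π, sphG n ρ r θ ≤
      (π * Real.exp (2*ρ) + 1 + 2*(20:ℝ)^ρ) * ((1+r) * Real.exp (-ρ*r)) := by
  have hn2 : (2:ℝ) ≤ (n:ℝ) := by exact_mod_cast hn
  have hρ0 : 0 < ρ := by rw [hρ]; linarith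
  have h20 : (0:ℝ) < (20:ℝ)^ρ := Real.rpow_pos_of_pos (by norm_num) _
  rcases le_or_gt r 1 with hr1 | hr1
  · -- small r
    have hbound : ∫ θ in Set.Ioo (0:ℝ) π, sphG n ρ r θ ≤
        ∫ _θ in Set.Ioo (0:ℝ) π, Real.exp (ρ * r) := by
      apply setIntegral_mono_on (sphG_intOn n ρ r hr _ Set.Ioo_subset_Icc_self)
        (integrableOn_const (by simp [Real.pi_pos]))
        measurableSet_Ioo
      exact fun θ hθ => sphG_le_exp n ρ r θ hr hρ0.le (Set.Ioo_subset_Icc_self hθ)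
    have hconst : ∫ _θ in Set.Ioo (0:ℝ) π, Real.exp (ρ * r) = π * Real.exp (ρ * r) := by
      rw [setIntegral_const]
      simp [Real.volume_Ioo, ENNReal.toReal_ofReal Real.pi_pos.le, smul_eq_mul, Real.pi_pos.le]
    have hexp : Real.exp (ρ * r) ≤ Real.exp (2*ρ) * Real.exp (-ρ*r) := by
      rw [← Real.exp_add]
      apply Real.exp_le_exp.2
      nlinarith
    have h1r : (1:ℝ) ≤ 1 + r := by linarith
    calc ∫ θ in Set.Ioo (0:ℝ) π, sphG n ρ r θ ≤ π * Real.exp (ρ * r) := by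
          rw [← hconst]; exact hbound
      _ ≤ π * (Real.exp (2*ρ) * Real.exp (-ρ*r)) := by
          exact mul_le_mul_of_nonneg_left hexp Real.pi_pos.le
      _ ≤ π * Real.exp (2*ρ) * ((1+r) * Real.exp (-ρ*r)) := by
          have h := Real.exp_pos (2*ρ); have h2 := Real.exp_pos (-ρ*r)
          nlinarith [mul_nonneg (mul_nonneg (mul_nonneg Real.pi_pos.le h.le) h2.le) hr]
      _ ≤ _ := by
          have : (0:ℝ) ≤ (1+r) * Real.exp (-ρ*r) := by positivity
          nlinarith
  · -- large r
    obtain ⟨t, ht⟩ : ∃ t : ℝ, t = Real.exp (-r) := ⟨_, rfl⟩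
    have ht0 : 0 < t := ht ▸ Real.exp_pos _
    have ht1 : t ≤ 1 := ht ▸ Real.exp_le_one_iff.2 (by linarith)
    have htπ : t < π := lt_of_le_of_lt ht1 (by linarith [Real.pi_gt_three])
    have hsub1 : Set.Ioo (0:ℝ) t ⊆ Set.Icc 0 π :=
      fun x hx => ⟨hx.1.le, hx.2.le.trans htπ.le⟩
    have hsub2 : Set.Ico t π ⊆ Set.Icc 0 π :=
      fun x hx => ⟨ht0.le.trans hx.1, hx.2.le⟩
    have hdisj : Disjoint (Set.Ioo (0:ℝ) t) (Set.Ico t π) := by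
      rw [Set.disjoint_left]
      rintro x ⟨_, h2⟩ ⟨h3, _⟩
      exact absurd h2 (not_lt.2 h3)
    have hsplit : Set.Ioo (0:ℝ) π = Set.Ioo 0 t ∪ Set.Ico t π :=
      (Set.Ioo_union_Ico_eq_Ioo ht0 htπ.le).symm
    rw [hsplit, setIntegral_union hdisj measurableSet_Ico
      (sphG_intOn n ρ r hr _ hsub1) (sphG_intOn n ρ r hr _ hsub2)]
    -- first piece
    have hA : ∫ θ in Set.Ioo (0:ℝ) t, sphG n ρ r θ ≤ Real.exp (-ρ*r) := by
      have hptw : ∀ θ ∈ Set.Ioo (0:ℝ) t, sphG n ρ r θ ≤ θ^(n-2) * Real.exp (ρ*r) := by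
        intro θ hθ
        have hθc : θ ∈ Set.Icc (0:ℝ) π := hsub1 hθ
        have hs0 := Real.sin_nonneg_of_nonneg_of_le_pi hθc.1 hθc.2
        have h1 : Real.sin θ ^ (n-2) ≤ θ^(n-2) :=
          pow_le_pow_left₀ hs0 (Real.sin_le hθ.1.le) _
        have h2 : (Real.cosh r - Real.sinh r * Real.cos θ) ^ (-ρ) ≤ Real.exp (ρ*r) := by
          have := Real.rpow_le_rpow_of_nonpos (Real.exp_pos (-r))
            (sph_exp_le_base r θ hr) (neg_nonpos.2 hρ0.le)
          rwa [← Real.exp_mul, (by ring : -r * -ρ = ρ * r)] at this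
        exact mul_le_mul h1 h2 (Real.rpow_nonneg (sph_base_pos r θ hr).le _)
          (pow_nonneg hθ.1.le _)
      have hmono : ∫ θ in Set.Ioo (0:ℝ) t, sphG n ρ r θ ≤
          ∫ θ in Set.Ioo (0:ℝ) t, θ^(n-2) * Real.exp (ρ*r) := by
        apply setIntegral_mono_on (sphG_intOn n ρ r hr _ hsub1)
          ((((continuous_pow (n-2)).mul continuous_const).integrableOn_Icc
            (a := (0:ℝ)) (b := t)).mono_set Set.Ioo_subset_Icc_self)
          measurableSet_Ioo hptw
      have hval : ∫ θ in Set.Ioo (0:ℝ) t, θ^(n-2) * Real.exp (ρ*r)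
          = t^(n-1)/((n:ℝ)-1) * Real.exp (ρ*r) := by
        rw [← integral_Ioc_eq_integral_Ioo, ← intervalIntegral.integral_of_le ht0.le,
          intervalIntegral.integral_mul_const, integral_pow]
        have h1 : n - 2 + 1 = n - 1 := by omega
        have h2 : ((n - 2 : ℕ) : ℝ) + 1 = (n:ℝ) - 1 := by
          push_cast [Nat.cast_sub hn]; ring
        rw [h1, h2, zero_pow (by omega : n - 1 ≠ 0), sub_zero]
      have hfin : t^(n-1)/((n:ℝ)-1) * Real.exp (ρ*r) ≤ Real.exp (-ρ*r) := by
        have htp : t^(n-1) = Real.exp (-(((n:ℝ)-1)) * r) := by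
          rw [ht, ← Real.exp_nat_mul]
          congr 1
          push_cast [Nat.cast_sub (by omega : 1 ≤ n)]
          ring
        have hn1 : (1:ℝ) ≤ (n:ℝ) - 1 := by linarith
        have hkey : t^(n-1) * Real.exp (ρ*r) = Real.exp (-ρ*r) := by
          rw [htp, ← Real.exp_add]
          congr 1
          rw [hρ]; ring
        rw [div_mul_eq_mul_div, hkey]
        rw [div_le_iff₀ (by linarith)]
        nlinarith [Real.exp_pos (-ρ*r)]
      calc ∫ θ in Set.Ioo (0:ℝ) t, sphG n ρ r θ
          ≤ ∫ θ in Set.Ioo (0:ℝ) t, θ^(n-2) * Real.exp (ρ*r) := hmono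
        _ = t^(n-1)/((n:ℝ)-1) * Real.exp (ρ*r) := hval
        _ ≤ Real.exp (-ρ*r) := hfin
    -- second piece
    have hB : ∫ θ in Set.Ico t π, sphG n ρ r θ ≤
        (20:ℝ)^ρ * Real.exp (-ρ*r) * (2 * (1+r)) := by
      have hIinv : IntegrableOn (fun θ : ℝ => (20:ℝ)^ρ * Real.exp (-ρ*r) * θ⁻¹)
          (Set.Ico t π) := by
        have hc2 : ContinuousOn (fun θ : ℝ => (20:ℝ)^ρ * Real.exp (-ρ*r) * θ⁻¹)
            (Set.Icc t π) :=
          continuousOn_const.mul (ContinuousOn.inv₀ continuousOn_id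
            (fun x hx => ne_of_gt (lt_of_lt_of_le ht0 hx.1)))
        exact (hc2.integrableOn_compact isCompact_Icc).mono_set Set.Ico_subset_Icc_self
      have hmono : ∫ θ in Set.Ico t π, sphG n ρ r θ ≤
          ∫ θ in Set.Ico t π, (20:ℝ)^ρ * Real.exp (-ρ*r) * θ⁻¹ := by
        apply setIntegral_mono_on (sphG_intOn n ρ r hr _ hsub2) hIinv measurableSet_Ico
        intro θ hθ
        exact sph_point2 n hn ρ hρ r hr1.le θ (lt_of_lt_of_le ht0 hθ.1) hθ.2.le
      have hval : ∫ θ in Set.Ico t π, (20:ℝ)^ρ * Real.exp (-ρ*r) * θ⁻¹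
          = (20:ℝ)^ρ * Real.exp (-ρ*r) * (Real.log π + r) := by
        rw [integral_Ico_eq_integral_Ioo, ← integral_Ioc_eq_integral_Ioo,
          ← intervalIntegral.integral_of_le htπ.le,
          intervalIntegral.integral_const_mul, integral_inv_of_pos ht0
            Real.pi_pos]
        congr 1
        rw [Real.log_div Real.pi_pos.ne' ht0.ne', ht, Real.log_exp]
        ring
      have hlog : Real.log π + r ≤ 2 * (1+r) := by
        have h1 : Real.log π ≤ 2 := by
          rw [show (2:ℝ) = Real.log (Real.exp 2) by rw [Real.log_exp]]
          apply Real.log_le_log Real.pi_pos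
          have h := Real.exp_one_gt_d9
          have : Real.exp 2 = Real.exp 1 * Real.exp 1 := by
            rw [← Real.exp_add]; norm_num
          nlinarith [Real.pi_lt_d2]
        linarith
      calc ∫ θ in Set.Ico t π, sphG n ρ r θ
          ≤ (20:ℝ)^ρ * Real.exp (-ρ*r) * (Real.log π + r) := by rw [← hval]; exact hmono
        _ ≤ (20:ℝ)^ρ * Real.exp (-ρ*r) * (2 * (1+r)) := by
            apply mul_le_mul_of_nonneg_left hlog (by positivity)
    have hpos : (0:ℝ) ≤ π * Real.exp (2*ρ) * ((1+r) * Real.exp (-ρ*r)) := by positivity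
    have h1r : (1:ℝ) ≤ 1 + r := by linarith
    have hexpr : (0:ℝ) < Real.exp (-ρ*r) := Real.exp_pos _
    calc (∫ θ in Set.Ioo (0:ℝ) t, sphG n ρ r θ) + ∫ θ in Set.Ico t π, sphG n ρ r θ
        ≤ Real.exp (-ρ*r) + (20:ℝ)^ρ * Real.exp (-ρ*r) * (2 * (1+r)) :=
          add_le_add hA hB
      _ ≤ (π * Real.exp (2*ρ) + 1 + 2*(20:ℝ)^ρ) * ((1+r) * Real.exp (-ρ*r)) := by
          nlinarith [mul_nonneg (mul_nonneg h20.le hexpr.le) hr, hpos,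
            mul_pos h20 hexpr]

/-- Basic estimates for the spherical functions `φ_λ` on the real hyperbolic space `H^n`,
via their integral representation:
`|φ_λ(r)| ≤ φ_0(r)` and `φ_0(r) ≲ (1+r) e^{-ρ r}` with `ρ = (n-1)/2`. -/
theorem spherical_function_basic_estimates (n : ℕ) (hn : 2 ≤ n)
    (ρ : ℝ) (hρ : ρ = ((n : ℝ) - 1) / 2)
    (φ : ℝ → ℝ → ℂ)
    (hφ : ∀ lam r : ℝ, φ lam r =
      ((Real.Gamma ((n : ℝ) / 2) / (Real.sqrt π * Real.Gamma (((n : ℝ) - 1) / 2)) : ℝ) : ℂ) *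
        ∫ θ in Set.Ioo (0 : ℝ) π,
          ((Real.sin θ ^ (n - 2) : ℝ) : ℂ) *
            (((Real.cosh r - Real.sinh r * Real.cos θ : ℝ)) : ℂ) ^
              (-(ρ : ℂ) - Complex.I * lam)) :
    (∀ lam r : ℝ, 0 ≤ r → ‖φ lam r‖ ≤ ‖φ 0 r‖) ∧
    ∃ C : ℝ, 0 < C ∧ ∀ r : ℝ, 0 ≤ r → ‖φ 0 r‖ ≤ C * (1 + r) * Real.exp (-ρ * r) := by
  have hn2 : (2:ℝ) ≤ (n:ℝ) := by exact_mod_cast hn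
  set c : ℝ := Real.Gamma ((n : ℝ) / 2) / (Real.sqrt π * Real.Gamma (((n : ℝ) - 1) / 2))
    with hc
  have hcpos : 0 < c := by
    apply div_pos (Real.Gamma_pos_of_pos (by linarith))
    exact mul_pos (Real.sqrt_pos.2 Real.pi_pos) (Real.Gamma_pos_of_pos (by linarith))
  -- `φ 0 r` is the real nonneg integral
  have hzero : ∀ r : ℝ, 0 ≤ r →
      ‖φ 0 r‖ = c * ∫ θ in Set.Ioo (0:ℝ) π, sphG n ρ r θ := by
    intro r hr
    have hInt : (∫ θ in Set.Ioo (0 : ℝ) π,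
        ((Real.sin θ ^ (n - 2) : ℝ) : ℂ) *
          (((Real.cosh r - Real.sinh r * Real.cos θ : ℝ)) : ℂ) ^
            (-(ρ : ℂ) - Complex.I * ((0:ℝ):ℂ)))
        = (((∫ θ in Set.Ioo (0:ℝ) π, sphG n ρ r θ : ℝ)) : ℂ) := by
      rw [setIntegral_congr_fun measurableSet_Ioo
        (fun θ _ => sph_integrand_zero n ρ r θ hr)]
      exact integral_ofReal (𝕜 := ℂ)
    have hIntNonneg : 0 ≤ ∫ θ in Set.Ioo (0:ℝ) π, sphG n ρ r θ := by
      apply setIntegral_nonneg measurableSet_Ioo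
      exact fun θ hθ => sphG_nonneg n ρ r θ (Set.Ioo_subset_Icc_self hθ) hr
    rw [hφ 0 r, hInt, ← Complex.ofReal_mul, Complex.norm_real, Real.norm_eq_abs]
    exact _root_.abs_of_nonneg (mul_nonneg hcpos.le hIntNonneg)
  constructor
  · intro lam r hr
    rw [hφ lam r, hzero r hr, norm_mul, Complex.norm_real, Real.norm_eq_abs,
      _root_.abs_of_nonneg hcpos.le]
    apply mul_le_mul_of_nonneg_left _ hcpos.le
    calc ‖∫ θ in Set.Ioo (0 : ℝ) π,
          ((Real.sin θ ^ (n - 2) : ℝ) : ℂ) *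
            (((Real.cosh r - Real.sinh r * Real.cos θ : ℝ)) : ℂ) ^
              (-(ρ : ℂ) - Complex.I * lam)‖
        ≤ ∫ θ in Set.Ioo (0 : ℝ) π,
            ‖((Real.sin θ ^ (n - 2) : ℝ) : ℂ) *
              (((Real.cosh r - Real.sinh r * Real.cos θ : ℝ)) : ℂ) ^
                (-(ρ : ℂ) - Complex.I * lam)‖ := norm_integral_le_integral_norm _
      _ = ∫ θ in Set.Ioo (0 : ℝ) π, sphG n ρ r θ := by
          apply setIntegral_congr_fun measurableSet_Ioo
          intro θ hθ
          exact sph_norm_eq n ρ lam r θ hr (Set.Ioo_subset_Icc_self hθ)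
  · refine ⟨c * (π * Real.exp (2*ρ) + 1 + 2*(20:ℝ)^ρ), ?_, ?_⟩
    · have h20 : (0:ℝ) < (20:ℝ)^ρ := Real.rpow_pos_of_pos (by norm_num) _
      have := Real.exp_pos (2*ρ)
      have := Real.pi_pos
      positivity
    · intro r hr
      rw [hzero r hr]
      calc c * ∫ θ in Set.Ioo (0:ℝ) π, sphG n ρ r θ
          ≤ c * ((π * Real.exp (2*ρ) + 1 + 2*(20:ℝ)^ρ) * ((1+r) * Real.exp (-ρ*r))) :=
            mul_le_mul_of_nonneg_left (sph_key n hn ρ hρ r hr) hcpos.le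
        _ = c * (π * Real.exp (2*ρ) + 1 + 2*(20:ℝ)^ρ) * (1 + r) * Real.exp (-ρ * r) := by
            ring
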